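/- Let X be a finite graph. The natural monoid homomorphism from the right-angled Artin monoid M_X to the right-angled Artin group A_X (sending each generator to the corresponding generator) is injective. -/

import Mathlib

/-- Defining relators of the right-angled Artin group of a graph. -/
def raagRels {V : Type*} (X : SimpleGraph V) : Set (FreeGroup V) :=
  {r | ∃ x y : V, X.Adj x y ∧
    r = FreeGroup.of x * FreeGroup.of y * (FreeGroup.of x)⁻¹ * (FreeGroup.of y)⁻¹}

/-- The right-angled Artin group of a graph. -/
def RAAG {V : Type*} (X : SimpleGraph V) : Type _ := PresentedGroup (raagRels X)

instance {V : Type*} (X : SimpleGraph V) : Group (RAAG X) := by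
  unfold RAAG; infer_instance

/-- The generator of the RAAG corresponding to a vertex. -/
def RAAG.of {V : Type*} (X : SimpleGraph V) (v : V) : RAAG X := PresentedGroup.of v
/-- The congruence on the free monoid defining the right-angled Artin monoid. -/
def raamCon {V : Type*} (X : SimpleGraph V) : Con (FreeMonoid V) :=
  conGen (fun a b => ∃ x y : V, X.Adj x y ∧
    a = FreeMonoid.of x * FreeMonoid.of y ∧ b = FreeMonoid.of y * FreeMonoid.of x)

/-- The right-angled Artin monoid of a graph. -/
def RAAM {V : Type*} (X : SimpleGraph V) : Type _ := (raamCon X).Quotient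

instance {V : Type*} (X : SimpleGraph V) : Monoid (RAAM X) := by
  unfold RAAM; infer_instance

/-- The generator of the RAAM corresponding to a vertex. -/
def RAAM.of {V : Type*} (X : SimpleGraph V) (v : V) : RAAM X :=
  (raamCon X).mk' (FreeMonoid.of v)

/-- The image in `RAAM X` of a word in the vertices. -/
def RAAM.mk {V : Type*} (X : SimpleGraph V) (l : List V) : RAAM X :=
  (raamCon X).mk' (FreeMonoid.ofList l)

open scoped Classical
open scoped commutatorElement

section Aux

variable {V : Type*} (X : SimpleGraph V)

/-- Adjacent generators commute in the RAAG. -/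
lemma RAAG.of_comm {x y : V} (h : X.Adj x y) :
    RAAG.of X x * RAAG.of X y = RAAG.of X y * RAAG.of X x := by
  have h1 : (RAAG.of X x * RAAG.of X y * (RAAG.of X x)⁻¹ * (RAAG.of X y)⁻¹ : RAAG X) = 1 := by
    have hr : (FreeGroup.of x * FreeGroup.of y * (FreeGroup.of x)⁻¹ * (FreeGroup.of y)⁻¹)
        ∈ Subgroup.normalClosure (raagRels X) :=
      Subgroup.subset_normalClosure ⟨x, y, h, rfl⟩
    exact (QuotientGroup.eq_one_iff _).mpr hr
  have h2 : ⁅RAAG.of X x, RAAG.of X y⁆ = 1 := by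
    rw [commutatorElement_def]; exact h1
  exact (commutatorElement_eq_one_iff_mul_comm.mp h2)

/-- The canonical monoid hom from the RAAM to the RAAG. -/
def raamToRaag : RAAM X →* RAAG X :=
  (raamCon X).lift (FreeMonoid.lift (RAAG.of X)) (by
    apply Con.conGen_le.mpr
    rintro u v ⟨x, y, hxy, rfl, rfl⟩
    show FreeMonoid.lift (RAAG.of X) _ = FreeMonoid.lift (RAAG.of X) _
    simp only [map_mul, FreeMonoid.lift_eval_of]
    exact RAAG.of_comm X hxy)

lemma raamToRaag_of (v : V) : raamToRaag X (RAAM.of X v) = RAAG.of X v := rfl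

/-- Projection hom from the RAAG onto the free group on a non-adjacent pair of vertices. -/
noncomputable def gHom (a b : V) (hab : ¬ X.Adj a b) : RAAG X →* FreeGroup V :=
  PresentedGroup.toGroup (f := fun c => if c = a ∨ c = b then FreeGroup.of c else 1) <| by
    rintro r ⟨x, y, hxy, rfl⟩
    simp only [map_mul, map_inv, FreeGroup.lift_apply_of]
    have hcomm : (if x = a ∨ x = b then FreeGroup.of x else 1) *
        (if y = a ∨ y = b then FreeGroup.of y else 1) =
        (if y = a ∨ y = b then FreeGroup.of y else 1) *
        (if x = a ∨ x = b then FreeGroup.of x else 1) := by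
      by_cases hx : x = a ∨ x = b
      · by_cases hy : y = a ∨ y = b
        · exfalso
          rcases hx with rfl | rfl <;> rcases hy with rfl | rfl
          · exact X.irrefl hxy
          · exact hab hxy
          · exact hab hxy.symm
          · exact X.irrefl hxy
        · simp [hx, hy]
      · simp [hx]
    rw [hcomm]
    group

/-- `fw a b l` is the word `l` with all letters other than `a`, `b` deleted. -/
noncomputable def fw (a b : V) (l : List V) : List V :=
  l.filter fun c => decide (c = a ∨ c = b)

variable {X}

lemma fw_nil (a b : V) : fw a b ([] : List V) = [] := rfl

lemma fw_cons_pos {a b c : V} (h : c = a ∨ c = b) (l : List V) :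
    fw a b (c :: l) = c :: fw a b l := by simp [fw, h]

lemma fw_cons_neg {a b c : V} (h : ¬ (c = a ∨ c = b)) (l : List V) :
    fw a b (c :: l) = fw a b l := by simp [fw, h]

lemma fw_append (a b : V) (l1 l2 : List V) :
    fw a b (l1 ++ l2) = fw a b l1 ++ fw a b l2 := List.filter_append ..

variable (X)

/-- Computation of a pair-projection on the image of a positive word. -/
lemma g_f_mk (a b : V) (hab : ¬ X.Adj a b) (l : List V) :
    gHom X a b hab (raamToRaag X ((raamCon X).mk' (FreeMonoid.ofList l))) =
      FreeGroup.mk ((fw a b l).map (fun c => (c, true))) := by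
  induction l with
  | nil =>
    simp only [FreeMonoid.ofList_nil, map_one, fw_nil, List.map_nil]
    exact FreeGroup.one_eq_mk
  | cons c t ih =>
    rw [FreeMonoid.ofList_cons]
    show gHom X a b hab (raamToRaag X (RAAM.of X c * RAAM.mk X t)) = _
    simp only [map_mul]
    rw [RAAM.of, RAAM.mk, ih]
    have h2 : raamToRaag X ((raamCon X).mk' (FreeMonoid.of c)) = RAAG.of X c := rfl
    have h3 : gHom X a b hab (RAAG.of X c) =
        if c = a ∨ c = b then FreeGroup.of c else 1 :=
      PresentedGroup.toGroup.of _
    rw [h2, h3]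
    by_cases hc : c = a ∨ c = b
    · rw [if_pos hc, fw_cons_pos hc, List.map_cons,
        show FreeGroup.of c = FreeGroup.mk [(c, true)] from rfl, FreeGroup.mul_mk]
      rfl
    · rw [if_neg hc, fw_cons_neg hc, one_mul]

lemma reduce_map_true (l : List V) :
    FreeGroup.reduce (l.map (fun c => (c, true))) = l.map (fun c => (c, true)) := by
  induction l with
  | nil => rfl
  | cons c t ih =>
    rw [List.map_cons, FreeGroup.reduce.cons, ih]
    cases t with
    | nil => rfl
    | cons d t' => simp

lemma mk_map_true_inj {l1 l2 : List V}
    (h : FreeGroup.mk (l1.map (fun c => (c, true))) =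
      FreeGroup.mk (l2.map (fun c => (c, true)))) : l1 = l2 := by
  have h2 := FreeGroup.reduce.sound h
  rw [reduce_map_true, reduce_map_true] at h2
  exact List.map_injective_iff.mpr (fun x y hxy => congrArg Prod.fst hxy) h2

lemma exists_first (a : V) : ∀ {l : List V}, a ∈ l → ∃ p s, l = p ++ a :: s ∧ a ∉ p := by
  intro l h
  induction l with
  | nil => simp at h
  | cons c t ih =>
    by_cases hc : c = a
    · exact ⟨[], t, by simp [hc], by simp⟩
    · have ha : a ∈ t := by
        rcases List.mem_cons.mp h with h' | h'
        · exact absurd h'.symm hc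
        · exact h'
      obtain ⟨p, s, rfl, hp⟩ := ih ha
      refine ⟨c :: p, s, rfl, ?_⟩
      intro hmem
      rcases List.mem_cons.mp hmem with h' | h'
      · exact hc h'.symm
      · exact hp h'

/-- A letter adjacent to everything before it can be moved to the front in the RAAM. -/
lemma move_left (a : V) : ∀ (p s : List V), (∀ b ∈ p, X.Adj a b) →
    raamCon X (FreeMonoid.ofList (p ++ a :: s)) (FreeMonoid.ofList (a :: (p ++ s))) := by
  intro p
  induction p with
  | nil => intro s _; exact (raamCon X).refl _
  | cons b t ih =>
    intro s hadj
    have h2 : raamCon X (FreeMonoid.of b * FreeMonoid.ofList (t ++ a :: s))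
        (FreeMonoid.of b * FreeMonoid.ofList (a :: (t ++ s))) :=
      (raamCon X).mul ((raamCon X).refl (FreeMonoid.of b))
        (ih s (fun c hc => hadj c (List.mem_cons_of_mem _ hc)))
    have h3 : raamCon X (FreeMonoid.of b * FreeMonoid.of a)
        (FreeMonoid.of a * FreeMonoid.of b) :=
      ConGen.Rel.of _ _ ⟨b, a, (hadj b (List.mem_cons_self)).symm, rfl, rfl⟩
    have h4 : raamCon X ((FreeMonoid.of b * FreeMonoid.of a) * FreeMonoid.ofList (t ++ s))
        ((FreeMonoid.of a * FreeMonoid.of b) * FreeMonoid.ofList (t ++ s)) :=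
      (raamCon X).mul h3 ((raamCon X).refl (FreeMonoid.ofList (t ++ s)))
    exact (raamCon X).trans h2 h4

/-- The projection lemma: positive words with equal projections onto all
non-adjacent pairs are equal in the RAAM. -/
lemma key : ∀ (l1 l2 : List V), (∀ a b : V, ¬ X.Adj a b → fw a b l1 = fw a b l2) →
    raamCon X (FreeMonoid.ofList l1) (FreeMonoid.ofList l2) := by
  intro l1
  induction l1 with
  | nil =>
    intro l2 h
    cases l2 with
    | nil => exact (raamCon X).refl _
    | cons c t =>
      exfalso
      have h' := h c c (X.irrefl)
      have hc : c ∈ fw c c (c :: t) := by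
        rw [fw_cons_pos (Or.inl rfl)]; exact List.mem_cons_self
      rw [← h'] at hc
      simp [fw_nil] at hc
  | cons a t1 ih =>
    intro l2 h
    have ha : a ∈ l2 := by
      have h' := h a a (X.irrefl)
      have hmem : a ∈ fw a a l2 := by
        rw [← h', fw_cons_pos (Or.inl rfl)]; exact List.mem_cons_self
      exact (List.mem_filter.mp hmem).1
    obtain ⟨p, s, rfl, hnp⟩ := exists_first a ha
    have hadj : ∀ b ∈ p, X.Adj a b := by
      intro b hb
      by_contra hnadj
      have h' := h a b hnadj
      rw [fw_cons_pos (Or.inl rfl), fw_append, fw_cons_pos (Or.inl rfl)] at h'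
      have hb' : b ∈ fw a b p := List.mem_filter.mpr ⟨hb, by simp⟩
      obtain ⟨c, r, hcr⟩ := List.exists_cons_of_ne_nil (List.ne_nil_of_mem hb')
      rw [hcr, List.cons_append] at h'
      have hac : a = c := (List.cons.injEq _ _ _ _ ▸ h').1
      have hcp : c ∈ p := (List.mem_filter.mp (hcr ▸ (List.mem_cons_self (a := c) (l := r)))).1
      exact hnp (hac ▸ hcp)
    have hfilters : ∀ a' b' : V, ¬ X.Adj a' b' → fw a' b' t1 = fw a' b' (p ++ s) := by
      intro a' b' hn
      have h' := h a' b' hn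
      by_cases hmem : a = a' ∨ a = b'
      · have hp0 : fw a' b' p = [] := by
          apply List.filter_eq_nil_iff.mpr
          intro c hc
          simp only [decide_eq_true_eq]
          rintro (rfl | rfl)
          · rcases hmem with rfl | rfl
            · exact hnp hc
            · exact hn ((hadj _ hc).symm)
          · rcases hmem with rfl | rfl
            · exact hn (hadj _ hc)
            · exact hnp hc
        rw [fw_cons_pos hmem, fw_append, hp0, fw_cons_pos hmem, List.nil_append] at h'
        rw [fw_append, hp0, List.nil_append]
        exact List.cons.injEq _ _ _ _ ▸ h' |>.2
      · rw [fw_cons_neg hmem, fw_append, fw_cons_neg hmem] at h'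
        rw [fw_append]
        exact h'
    have hrec := ih (p ++ s) hfilters
    have h2 : raamCon X (FreeMonoid.ofList (a :: t1)) (FreeMonoid.ofList (a :: (p ++ s))) :=
      (raamCon X).mul ((raamCon X).refl (FreeMonoid.of a)) hrec
    exact (raamCon X).trans h2 ((raamCon X).symm (move_left X a p s hadj))

end Aux

theorem raam_to_raag_injective {V : Type*} [Fintype V] (X : SimpleGraph V) :
    ∃ f : RAAM X →* RAAG X,
      (∀ v : V, f (RAAM.of X v) = RAAG.of X v) ∧ Function.Injective f := by
  refine ⟨raamToRaag X, raamToRaag_of X, ?_⟩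
  intro u v huv
  obtain ⟨w1, rfl⟩ := Con.mk'_surjective u
  obtain ⟨w2, rfl⟩ := Con.mk'_surjective v
  have hcon : raamCon X w1 w2 := by
    have hk := key X (FreeMonoid.toList w1) (FreeMonoid.toList w2) ?_
    · exact hk
    · intro a b hab
      have h1 : gHom X a b hab
          (raamToRaag X ((raamCon X).mk' (FreeMonoid.ofList (FreeMonoid.toList w1)))) =
          gHom X a b hab
          (raamToRaag X ((raamCon X).mk' (FreeMonoid.ofList (FreeMonoid.toList w2)))) :=
        congrArg _ huv
      rw [g_f_mk, g_f_mk] at h1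
      exact mk_map_true_inj h1
  exact (Con.eq _).mpr hcon
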